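/- Let X be a {0,1}-valued random variable and let Y be obtained from X by flipping its value with probability p, 0 < p < 1/2, independently of X. Then I(Y) ≤ (1−2p)²·I(X), where I(Z) = 1 − H(Z) is the Shannon information of a bit Z (H the binary entropy in bits). -/

import Mathlib

/-- Binary Shannon entropy (in bits) of a bit with `Pr[·=1] = q`. -/
noncomputable def binEnt (q : ℝ) : ℝ :=
  -(q * Real.logb 2 q) - (1 - q) * Real.logb 2 (1 - q)

/-- Shannon information `I = 1 − H` of a bit with `Pr[·=1] = q`. -/
noncomputable def binInfo (q : ℝ) : ℝ := 1 - binEnt q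

lemma binEnt_eq (q : ℝ) : binEnt q = Real.binEntropy q / Real.log 2 := by
  simp only [binEnt, Real.binEntropy, Real.logb, Real.log_inv]
  ring

lemma binEnt_symm (q : ℝ) : binEnt (1 - q) = binEnt q := by
  simp only [binEnt, sub_sub_cancel]
  ring

lemma binInfo_symm (q : ℝ) : binInfo (1 - q) = binInfo q := by
  simp [binInfo, binEnt_symm]

lemma binInfo_eq : binInfo = fun q => 1 - Real.binEntropy q / Real.log 2 :=
  funext fun q => by simp [binInfo, binEnt_eq]

lemma continuous_binInfo : Continuous binInfo := by
  rw [binInfo_eq]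
  exact continuous_const.sub (Real.binEntropy_continuous.div_const _)

/-- Key inequality: `artanh(l·x) ≤ l·artanh(x)` in log form. -/
lemma key_ineq (l : ℝ) (hl0 : 0 ≤ l) (hl1 : l ≤ 1) :
    ∀ x : ℝ, 0 ≤ x → x < 1 →
      Real.log (1 + l * x) - Real.log (1 - l * x) ≤
        l * (Real.log (1 + x) - Real.log (1 - x)) := by
  set ψ : ℝ → ℝ := fun x =>
    l * (Real.log (1 + x) - Real.log (1 - x)) -
      (Real.log (1 + l * x) - Real.log (1 - l * x)) with hψ
  have hder : ∀ x ∈ Set.Ico (0 : ℝ) 1,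
      HasDerivAt ψ
        (l * ((1 + x)⁻¹ + (1 - x)⁻¹) - (l * (1 + l * x)⁻¹ + l * (1 - l * x)⁻¹)) x := by
    intro x hx
    obtain ⟨hx0, hx1⟩ := hx
    have hlx0 : 0 ≤ l * x := mul_nonneg hl0 hx0
    have hlx1 : l * x < 1 := lt_of_le_of_lt (by nlinarith) hx1
    have h1 : (0:ℝ) < 1 + x := by linarith
    have h2 : (0:ℝ) < 1 - x := by linarith
    have h3 : (0:ℝ) < 1 + l * x := by linarith
    have h4 : (0:ℝ) < 1 - l * x := by linarith
    have d1 : HasDerivAt (fun x : ℝ => Real.log (1 + x)) ((1 + x)⁻¹) x := by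
      simpa [Function.comp_def, Pi.add_def, Pi.sub_def] using (Real.hasDerivAt_log h1.ne').comp x
        ((hasDerivAt_const x (1:ℝ)).add (hasDerivAt_id x))
    have d2 : HasDerivAt (fun x : ℝ => Real.log (1 - x)) (-(1 - x)⁻¹) x := by
      simpa [Function.comp_def, Pi.add_def, Pi.sub_def] using (Real.hasDerivAt_log h2.ne').comp x
        ((hasDerivAt_const x (1:ℝ)).sub (hasDerivAt_id x))
    have d3 : HasDerivAt (fun x : ℝ => Real.log (1 + l * x)) ((1 + l * x)⁻¹ * l) x := by
      simpa [Function.comp_def, Pi.add_def, Pi.sub_def] using (Real.hasDerivAt_log h3.ne').comp x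
        ((hasDerivAt_const x (1:ℝ)).add ((hasDerivAt_id x).const_mul l))
    have d4 : HasDerivAt (fun x : ℝ => Real.log (1 - l * x)) (-((1 - l * x)⁻¹ * l)) x := by
      simpa [Function.comp_def, Pi.add_def, Pi.sub_def] using (Real.hasDerivAt_log h4.ne').comp x
        ((hasDerivAt_const x (1:ℝ)).sub ((hasDerivAt_id x).const_mul l))
    have := (((d1.sub d2).const_mul l).sub (d3.sub d4))
    exact this.congr_deriv (by ring)
  have hcont : ContinuousOn ψ (Set.Ico (0:ℝ) 1) := fun x hx =>
    (hder x hx).continuousAt.continuousWithinAt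
  have hmono : MonotoneOn ψ (Set.Ico (0:ℝ) 1) := by
    apply monotoneOn_of_deriv_nonneg (convex_Ico 0 1) hcont
    · intro x hx
      rw [interior_Ico] at hx
      exact ((hder x ⟨le_of_lt hx.1, hx.2⟩).differentiableAt).differentiableWithinAt
    · intro x hx
      rw [interior_Ico] at hx
      obtain ⟨hx0, hx1⟩ := hx
      rw [(hder x ⟨le_of_lt hx0, hx1⟩).deriv]
      have hlx0 : 0 ≤ l * x := mul_nonneg hl0 (le_of_lt hx0)
      have hlx1 : l * x < 1 := lt_of_le_of_lt (by nlinarith) hx1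
      have h1 : (0:ℝ) < 1 + x := by linarith
      have h2 : (0:ℝ) < 1 - x := by linarith
      have h3 : (0:ℝ) < 1 + l * x := by linarith
      have h4 : (0:ℝ) < 1 - l * x := by linarith
      have e1 : (1 + x)⁻¹ + (1 - x)⁻¹ = 2 / ((1 + x) * (1 - x)) := by
        field_simp; ring
      have e2 : (1 + l * x)⁻¹ + (1 - l * x)⁻¹ = 2 / ((1 + l * x) * (1 - l * x)) := by
        field_simp; ring
      have hp1 : (0:ℝ) < (1 + x) * (1 - x) := mul_pos h1 h2
      have hp2 : (0:ℝ) < (1 + l * x) * (1 - l * x) := mul_pos h3 h4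
      have hl2 : l * l ≤ 1 := mul_le_one₀ hl1 hl0 hl1
      have hle : (1 + x) * (1 - x) ≤ (1 + l * x) * (1 - l * x) := by
        nlinarith [mul_nonneg (mul_nonneg hx0.le hx0.le) (sub_nonneg.mpr hl2)]
      have : 2 / ((1 + l * x) * (1 - l * x)) ≤ 2 / ((1 + x) * (1 - x)) :=
        div_le_div_of_nonneg_left (by norm_num) hp1 hle
      have h2l : l * (2 / ((1 + l * x) * (1 - l * x))) ≤ l * (2 / ((1 + x) * (1 - x))) :=
        mul_le_mul_of_nonneg_left this hl0
      have e3 : l * (1 + l * x)⁻¹ + l * (1 - l * x)⁻¹ = l * ((1 + l * x)⁻¹ + (1 - l * x)⁻¹) := by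
        ring
      rw [e3, e1, e2]
      linarith
  intro x hx0 hx1
  have h0 : ψ 0 = 0 := by simp [hψ]
  have := hmono (Set.mem_Ico.mpr ⟨le_refl 0, by norm_num⟩) (Set.mem_Ico.mpr ⟨hx0, hx1⟩) hx0
  rw [h0] at this
  simp only [hψ] at this
  linarith

lemma binInfo_half : binInfo (1/2) = 0 := by
  have : Real.binEntropy (1/2) = Real.log 2 := by
    rw [show (1:ℝ)/2 = 2⁻¹ by norm_num, Real.binEntropy_two_inv]
  have hlog2 : Real.log 2 ≠ 0 := ne_of_gt (Real.log_pos (by norm_num))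
  simp [binInfo, binEnt_eq, this, div_self hlog2]

lemma main_half (p α : ℝ) (hp0 : 0 < p) (hp1 : p < 1 / 2)
    (hα0 : 1/2 ≤ α) (hα1 : α ≤ 1) :
    binInfo (p + (1 - 2 * p) * α) ≤ (1 - 2 * p) ^ 2 * binInfo α := by
  set l : ℝ := 1 - 2 * p with hl
  have hl0 : 0 < l := by simp [hl]; linarith
  have hl1 : l < 1 := by simp [hl]; linarith
  set G : ℝ → ℝ := fun a => l ^ 2 * binInfo a - binInfo (p + l * a) with hG
  have hlog2 : (0:ℝ) < Real.log 2 := Real.log_pos (by norm_num)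
  have hcont : ContinuousOn G (Set.Icc (1/2 : ℝ) 1) := by
    apply Continuous.continuousOn
    exact (continuous_const.mul continuous_binInfo).sub
      (continuous_binInfo.comp (continuous_const.add (continuous_const.mul continuous_id)))
  have hder : ∀ a ∈ Set.Ioo (1/2 : ℝ) 1,
      HasDerivAt G ((l ^ 2 * (Real.log a - Real.log (1 - a)) -
        l * (Real.log (p + l * a) - Real.log (1 - (p + l * a)))) / Real.log 2) a := by
    intro a ha
    obtain ⟨ha0, ha1⟩ := ha
    have hq0 : 0 < p + l * a := by nlinarith
    have hq1 : p + l * a < 1 := by nlinarith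
    have d1 : HasDerivAt binInfo ((Real.log a - Real.log (1 - a)) / Real.log 2) a := by
      have h := (Real.hasDerivAt_binEntropy (p := a) (by linarith) (by linarith)).div_const
        (Real.log 2)
      have h2 : HasDerivAt (fun x => 1 - Real.binEntropy x / Real.log 2)
          (0 - (Real.log (1 - a) - Real.log a) / Real.log 2) a :=
        (hasDerivAt_const a (1:ℝ)).sub h
      rw [binInfo_eq]
      convert h2 using 1
      ring
    have d2 : HasDerivAt (fun a : ℝ => binInfo (p + l * a))
        ((Real.log (p + l * a) - Real.log (1 - (p + l * a))) / Real.log 2 * l) a := by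
      have h := Real.hasDerivAt_binEntropy (p := p + l * a) hq0.ne' hq1.ne
      have hinner : HasDerivAt (fun x : ℝ => p + l * x) l a := by
        simpa [Pi.add_def] using (hasDerivAt_const a p).add ((hasDerivAt_id a).const_mul l)
      have h3 : HasDerivAt (fun x : ℝ => 1 - Real.binEntropy (p + l * x) / Real.log 2)
          (0 - (Real.log (1 - (p + l * a)) - Real.log (p + l * a)) * l / Real.log 2) a := by
        have hc := (h.comp a hinner).div_const (Real.log 2)
        exact (hasDerivAt_const a (1:ℝ)).sub hc
      rw [binInfo_eq]
      convert h3 using 1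
      ring
    have := (d1.const_mul (l ^ 2)).sub d2
    exact this.congr_deriv (by ring)
  have hmono : MonotoneOn G (Set.Icc (1/2 : ℝ) 1) := by
    apply monotoneOn_of_deriv_nonneg (convex_Icc _ _) hcont
    · intro a ha
      rw [interior_Icc] at ha
      exact (hder a ha).differentiableAt.differentiableWithinAt
    · intro a ha
      rw [interior_Icc] at ha
      rw [(hder a ha).deriv]
      obtain ⟨ha0, ha1⟩ := ha
      -- apply key inequality with x = 2a - 1
      have hx0 : (0:ℝ) ≤ 2 * a - 1 := by linarith
      have hx1 : 2 * a - 1 < 1 := by linarith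
      have hkey := key_ineq l (le_of_lt hl0) (le_of_lt hl1) (2 * a - 1) hx0 hx1
      have e1 : 1 + (2 * a - 1) = 2 * a := by ring
      have e2 : 1 - (2 * a - 1) = 2 * (1 - a) := by ring
      have e3 : 1 + l * (2 * a - 1) = 2 * (p + l * a) := by rw [hl]; ring
      have e4 : 1 - l * (2 * a - 1) = 2 * (1 - (p + l * a)) := by rw [hl]; ring
      have hq0 : 0 < p + l * a := by nlinarith
      have hq1 : p + l * a < 1 := by nlinarith
      rw [e1, e2, e3, e4] at hkey
      have la : Real.log (2 * a) = Real.log 2 + Real.log a :=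
        Real.log_mul two_ne_zero (by linarith)
      have lb : Real.log (2 * (1 - a)) = Real.log 2 + Real.log (1 - a) :=
        Real.log_mul two_ne_zero (by intro h; rw [sub_eq_zero] at h; linarith)
      have lc : Real.log (2 * (p + l * a)) = Real.log 2 + Real.log (p + l * a) :=
        Real.log_mul two_ne_zero hq0.ne'
      have ld : Real.log (2 * (1 - (p + l * a))) = Real.log 2 + Real.log (1 - (p + l * a)) :=
        Real.log_mul two_ne_zero (by intro h; rw [sub_eq_zero] at h; linarith)
      rw [la, lb, lc, ld] at hkey
      have h1 : Real.log (p + l * a) - Real.log (1 - (p + l * a)) ≤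
          l * (Real.log a - Real.log (1 - a)) := by linarith
      have h2 : l * (Real.log (p + l * a) - Real.log (1 - (p + l * a))) ≤
          l ^ 2 * (Real.log a - Real.log (1 - a)) := by nlinarith
      apply div_nonneg _ (le_of_lt hlog2)
      linarith
  have h12 : (1/2 : ℝ) ∈ Set.Icc (1/2 : ℝ) 1 := by norm_num
  have hα : α ∈ Set.Icc (1/2 : ℝ) 1 := ⟨hα0, hα1⟩
  have := hmono h12 hα hα0
  have hG12 : G (1/2) = 0 := by
    have h : p + l * (1/2) = 1/2 := by rw [hl]; ring
    simp only [hG]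
    rw [h, binInfo_half]
    ring
  rw [hG12] at this
  simp only [hG] at this
  linarith

/-- Let `X` be a bit with `Pr[X=1] = α`, and let `Y` be obtained from `X` by flipping its
value with probability `p` (a binary symmetric channel), `0 < p < 1/2`, independently of `X`;
then `Pr[Y=1] = (1−p)·α + p·(1−α)` and `I(Y) ≤ (1−2p)²·I(X)`. -/
theorem info_flip_le (p α : ℝ) (hp0 : 0 < p) (hp1 : p < 1 / 2)
    (hα0 : 0 ≤ α) (hα1 : α ≤ 1) :
    binInfo ((1 - p) * α + p * (1 - α)) ≤ (1 - 2 * p) ^ 2 * binInfo α := by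
  have hq : (1 - p) * α + p * (1 - α) = p + (1 - 2 * p) * α := by ring
  rw [hq]
  rcases le_or_gt (1/2 : ℝ) α with h | h
  · exact main_half p α hp0 hp1 h hα1
  · have h1 : binInfo α = binInfo (1 - α) := (binInfo_symm α).symm
    have h2 : p + (1 - 2 * p) * α = 1 - (p + (1 - 2 * p) * (1 - α)) := by ring
    rw [h1, h2, binInfo_symm]
    exact main_half p (1 - α) hp0 hp1 (by linarith) (by linarith)
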